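/- Let y ∈ ℝⁿ, let X = [X_1 … X_N] be an n × Np real matrix partitioned into n × p blocks X_i, let λ > 0, and let â ∈ ℝ^{Np} be partitioned into p-dimensional blocks â_i. Then â minimizes the convex function a ↦ (1/n)‖y − Xa‖₂² + λ Σ_{i=1}^N ‖a_i‖₂ if and only if: X_iᵀ(y − Xâ) = (λn/2) â_i / ‖â_i‖₂ for every i with â_i ≠ 0, and ‖X_iᵀ(y − Xâ)‖₂ ≤ λn/2 for every i with â_i = 0. -/

import Mathlib

noncomputable section

/-- Euclidean norm of a finitely indexed real vector. -/
def vecNorm {ι : Type*} [Fintype ι] (v : ι → ℝ) : ℝ :=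
  Real.sqrt (∑ i, v i ^ 2)

/-- The group lasso objective: coefficient vectors `a : Fin N × Fin p → ℝ` are partitioned into
`N` blocks of size `p`; the objective is `(1/n)‖y − Xa‖₂² + λ ∑ᵢ ‖aᵢ‖₂`. -/
def groupLassoObj {n N p : ℕ} (X : Matrix (Fin n) (Fin N × Fin p) ℝ) (y : Fin n → ℝ)
    (lam : ℝ) (a : Fin N × Fin p → ℝ) : ℝ :=
  (n : ℝ)⁻¹ * ∑ t, (y t - X.mulVec a t) ^ 2 + lam * ∑ i : Fin N, vecNorm (fun r => a (i, r))

namespace GL8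

lemma vecNorm_nonneg {ι : Type*} [Fintype ι] (v : ι → ℝ) : 0 ≤ vecNorm v :=
  Real.sqrt_nonneg _

lemma vecNorm_sq {ι : Type*} [Fintype ι] (v : ι → ℝ) : vecNorm v ^ 2 = ∑ i, v i ^ 2 :=
  Real.sq_sqrt (Finset.sum_nonneg fun _ _ => sq_nonneg _)

lemma vecNorm_zero {ι : Type*} [Fintype ι] : vecNorm (0 : ι → ℝ) = 0 := by
  simp [vecNorm]

lemma vecNorm_pos {ι : Type*} [Fintype ι] {v : ι → ℝ} (h : v ≠ 0) : 0 < vecNorm v := by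
  rw [vecNorm, Real.sqrt_pos]
  obtain ⟨i, hi⟩ := Function.ne_iff.1 h
  exact Finset.sum_pos' (fun _ _ => sq_nonneg _)
    ⟨i, Finset.mem_univ i, by simpa [sq_abs] using pow_pos (abs_pos.2 hi) 2⟩

lemma cauchy {ι : Type*} [Fintype ι] (v w : ι → ℝ) :
    ∑ i, v i * w i ≤ vecNorm v * vecNorm w :=
  Real.sum_mul_le_sqrt_mul_sqrt Finset.univ v w

lemma vecNorm_smul {ι : Type*} [Fintype ι] (t : ℝ) (v : ι → ℝ) :
    vecNorm (fun i => t * v i) = |t| * vecNorm v := by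
  rw [vecNorm, vecNorm, ← Real.sqrt_sq_eq_abs, ← Real.sqrt_mul (sq_nonneg t)]
  congr 1
  rw [Finset.mul_sum]
  exact Finset.sum_congr rfl fun i _ => by ring

lemma sqrt_le_aux {x N : ℝ} (hx : 0 ≤ x) (hN : 0 < N) :
    Real.sqrt x ≤ N + (x - N ^ 2) / (2 * N) := by
  have h2 : N + (x - N ^ 2) / (2 * N) = (N ^ 2 + x) / (2 * N) := by field_simp; ring
  rw [h2]
  have h3 : (0:ℝ) ≤ (N ^ 2 + x) / (2 * N) := by positivity
  have h4 : x ≤ ((N ^ 2 + x) / (2 * N)) ^ 2 := by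
    rw [div_pow, le_div_iff₀ (by positivity)]
    nlinarith [sq_nonneg (N ^ 2 - x)]
  calc Real.sqrt x ≤ Real.sqrt (((N ^ 2 + x) / (2 * N)) ^ 2) := Real.sqrt_le_sqrt h4
    _ = (N ^ 2 + x) / (2 * N) := Real.sqrt_sq h3

lemma le_of_forall_pos {A B D : ℝ} (hD : 0 ≤ D) (h : ∀ t : ℝ, 0 < t → A ≤ B + t * D) :
    A ≤ B := by
  by_contra hc
  push_neg at hc
  rcases eq_or_lt_of_le hD with h0 | h0
  · have := h 1 one_pos; rw [← h0] at this; linarith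
  · have h1 := h ((A - B) / (2 * D)) (div_pos (by linarith) (by linarith))
    have h2 : (A - B) / (2 * D) * D = (A - B) / 2 := by field_simp
    rw [h2] at h1
    linarith

lemma expand {n N p : ℕ} (X : Matrix (Fin n) (Fin N × Fin p) ℝ) (y : Fin n → ℝ) (lam : ℝ)
    (ahat a : Fin N × Fin p → ℝ) :
    groupLassoObj X y lam a = groupLassoObj X y lam ahat
      + (n : ℝ)⁻¹ * ∑ t, (∑ j, X t j * (a j - ahat j)) ^ 2
      - 2 * (n : ℝ)⁻¹ * (∑ j, (a j - ahat j) * (∑ t, X t j * (y t - X.mulVec ahat t)))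
      + lam * ∑ i : Fin N,
          ((vecNorm fun r => a (i, r)) - vecNorm fun r => ahat (i, r)) := by
  have hmv : ∀ (b : Fin N × Fin p → ℝ) (t : Fin n), X.mulVec b t = ∑ j, X t j * b j := by
    intro b t; simp [Matrix.mulVec, dotProduct]
  have hpt : ∀ t, y t - X.mulVec a t
      = (y t - X.mulVec ahat t) - ∑ j, X t j * (a j - ahat j) := by
    intro t
    simp only [hmv, mul_sub, Finset.sum_sub_distrib]
    ring
  have hexp : ∀ t, ((y t - X.mulVec ahat t) - ∑ j, X t j * (a j - ahat j)) ^ 2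
      = (y t - X.mulVec ahat t) ^ 2 + (∑ j, X t j * (a j - ahat j)) ^ 2
        - 2 * ((y t - X.mulVec ahat t) * ∑ j, X t j * (a j - ahat j)) := fun t => by ring
  have hsq : ∑ t, (y t - X.mulVec a t) ^ 2
      = ∑ t, (y t - X.mulVec ahat t) ^ 2
        + ∑ t, (∑ j, X t j * (a j - ahat j)) ^ 2
        - 2 * ∑ t, (y t - X.mulVec ahat t) * (∑ j, X t j * (a j - ahat j)) := by
    simp only [hpt, hexp, Finset.sum_sub_distrib, Finset.sum_add_distrib, Finset.mul_sum]
  have hswap : ∑ t, (y t - X.mulVec ahat t) * (∑ j, X t j * (a j - ahat j))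
      = ∑ j, (a j - ahat j) * (∑ t, X t j * (y t - X.mulVec ahat t)) := by
    simp only [Finset.mul_sum]
    rw [Finset.sum_comm]
    exact Finset.sum_congr rfl fun j _ => Finset.sum_congr rfl fun t _ => by ring
  have hnorm : ∑ i : Fin N, (vecNorm fun r => a (i, r))
      = ∑ i : Fin N, (vecNorm fun r => ahat (i, r))
        + ∑ i : Fin N, ((vecNorm fun r => a (i, r)) - vecNorm fun r => ahat (i, r)) := by
    rw [← Finset.sum_add_distrib]
    exact Finset.sum_congr rfl fun i _ => by ring
  unfold groupLassoObj
  rw [hsq, hswap, hnorm]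
  ring

/-- Key perturbation inequality: perturbing only block `i` of a minimizer. -/
lemma key {n N p : ℕ} {X : Matrix (Fin n) (Fin N × Fin p) ℝ} {y : Fin n → ℝ} {lam : ℝ}
    {ahat : Fin N × Fin p → ℝ}
    (hmin : ∀ a, groupLassoObj X y lam ahat ≤ groupLassoObj X y lam a)
    (i : Fin N) (v : Fin p → ℝ) (t : ℝ) :
    2 * (n : ℝ)⁻¹ * t * (∑ r, v r * (∑ s, X s (i, r) * (y s - X.mulVec ahat s)))
      ≤ (n : ℝ)⁻¹ * t ^ 2 * (∑ s, (∑ r, X s (i, r) * v r) ^ 2)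
        + lam * ((vecNorm fun r => ahat (i, r) + t * v r) - vecNorm fun r => ahat (i, r)) := by
  set a : Fin N × Fin p → ℝ := fun j => ahat j + t * (if j.1 = i then v j.2 else 0) with ha
  have hmin' := hmin a
  rw [expand X y lam ahat a] at hmin'
  have hd : ∀ j : Fin N × Fin p, a j - ahat j = t * (if j.1 = i then v j.2 else 0) :=
    fun j => by simp [ha]
  have hsum : ∀ f : Fin N × Fin p → ℝ,
      (∑ j, (a j - ahat j) * f j) = t * ∑ r, v r * f (i, r) := by
    intro f
    simp only [hd]
    rw [Fintype.sum_prod_type]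
    rw [Finset.sum_eq_single i]
    · rw [Finset.mul_sum]
      refine Finset.sum_congr rfl fun r _ => ?_
      simp only [if_true]
      ring
    · intro b _ hb
      apply Finset.sum_eq_zero
      intro r _
      simp [hb]
    · intro h; exact absurd (Finset.mem_univ i) h
  have hsum2 : ∀ s : Fin n, (∑ j, X s j * (a j - ahat j)) = t * ∑ r, X s (i, r) * v r := by
    intro s
    rw [show (∑ j, X s j * (a j - ahat j)) = ∑ j, (a j - ahat j) * X s j from
      Finset.sum_congr rfl fun j _ => by ring, hsum (fun j => X s j)]
    rw [Finset.mul_sum, Finset.mul_sum]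
    exact Finset.sum_congr rfl fun r _ => by ring
  have hnorms : ∑ i' : Fin N, ((vecNorm fun r => a (i', r)) - vecNorm fun r => ahat (i', r))
      = (vecNorm fun r => ahat (i, r) + t * v r) - vecNorm fun r => ahat (i, r) := by
    rw [Finset.sum_eq_single i]
    · have : (fun r => a (i, r)) = fun r => ahat (i, r) + t * v r :=
        funext fun r => by simp [ha]
      rw [this]
    · intro b _ hb
      have : (fun r => a (b, r)) = fun r => ahat (b, r) := funext fun r => by simp [ha, hb]
      rw [this, sub_self]
    · intro h; exact absurd (Finset.mem_univ i) h
  have hC : ∑ s, (∑ j, X s j * (a j - ahat j)) ^ 2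
      = t ^ 2 * ∑ s, (∑ r, X s (i, r) * v r) ^ 2 := by
    rw [Finset.mul_sum]
    refine Finset.sum_congr rfl fun s _ => ?_
    rw [hsum2 s]; ring
  rw [hC, hsum (fun j => ∑ s, X s j * (y s - X.mulVec ahat s)), hnorms] at hmin'
  linarith

end GL8

/-- the Karush–Kuhn–Tucker (subgradient) conditions characterize the
minimizers of the group lasso objective: `â` is a minimizer iff
`Xᵢᵀ(y − Xâ) = (λn/2) âᵢ/‖âᵢ‖₂` for every block `i` with `âᵢ ≠ 0`, and
`‖Xᵢᵀ(y − Xâ)‖₂ ≤ λn/2` for every block `i` with `âᵢ = 0`. -/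
theorem groupLasso_isMin_iff_kkt {n N p : ℕ} (hn : 0 < n)
    (X : Matrix (Fin n) (Fin N × Fin p) ℝ) (y : Fin n → ℝ) (lam : ℝ) (hlam : 0 < lam)
    (ahat : Fin N × Fin p → ℝ) :
    (∀ a, groupLassoObj X y lam ahat ≤ groupLassoObj X y lam a) ↔
      ((∀ i : Fin N, (fun r => ahat (i, r)) ≠ 0 →
          ∀ r, (∑ t, X t (i, r) * (y t - X.mulVec ahat t)) =
            lam * n / 2 * (ahat (i, r) / vecNorm (fun s => ahat (i, s)))) ∧
        (∀ i : Fin N, (fun r => ahat (i, r)) = 0 →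
          vecNorm (fun r => ∑ t, X t (i, r) * (y t - X.mulVec ahat t)) ≤ lam * n / 2)) := by
  have hn' : (0:ℝ) < n := by exact_mod_cast hn
  have hninv : (n:ℝ) * (n:ℝ)⁻¹ = 1 := mul_inv_cancel₀ (ne_of_gt hn')
  constructor
  · intro hmin
    constructor
    · -- nonzero blocks
      intro i hne r
      set N0 := vecNorm (fun s => ahat (i, s)) with hN0
      have hN0pos : 0 < N0 := GL8.vecNorm_pos hne
      -- claim : the linearized optimality inequality in every direction v
      have claim : ∀ v : Fin p → ℝ,
          2 * (n:ℝ)⁻¹ * (∑ r', v r' * (∑ s, X s (i, r') * (y s - X.mulVec ahat s)))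
            ≤ lam * (∑ r', ahat (i, r') * v r') / N0 := by
        intro v
        set S := ∑ r', v r' * (∑ s, X s (i, r') * (y s - X.mulVec ahat s)) with hS
        set C := ∑ s, (∑ r', X s (i, r') * v r') ^ 2 with hCdef
        set P := ∑ r', ahat (i, r') * v r' with hP
        set Q := ∑ r', (v r') ^ 2 with hQ
        have hCnn : 0 ≤ C := Finset.sum_nonneg fun _ _ => sq_nonneg _
        have hQnn : 0 ≤ Q := Finset.sum_nonneg fun _ _ => sq_nonneg _
        have hD : 0 ≤ (n:ℝ)⁻¹ * C + lam * Q / (2 * N0) := by positivity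
        apply GL8.le_of_forall_pos hD
        intro t ht
        have h1 := GL8.key hmin i v t
        -- bound the perturbed norm
        have hxid : ∑ r', (ahat (i, r') + t * v r') ^ 2 = N0 ^ 2 + (2 * t * P + t ^ 2 * Q) := by
          have hexp : ∀ r', (ahat (i, r') + t * v r') ^ 2
              = ahat (i, r') ^ 2 + 2 * t * (ahat (i, r') * v r') + t ^ 2 * (v r') ^ 2 :=
            fun _ => by ring
          simp only [hexp, Finset.sum_add_distrib, ← Finset.mul_sum]
          rw [hN0, GL8.vecNorm_sq, hP, hQ]
          ring
        have hx0 : (0:ℝ) ≤ ∑ r', (ahat (i, r') + t * v r') ^ 2 :=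
          Finset.sum_nonneg fun _ _ => sq_nonneg _
        have h2 : (vecNorm fun r' => ahat (i, r') + t * v r')
            ≤ N0 + (2 * t * P + t ^ 2 * Q) / (2 * N0) := by
          have := GL8.sqrt_le_aux hx0 hN0pos
          rw [hxid] at this
          simpa [vecNorm, hxid] using this
        have h3 : lam * ((vecNorm fun r' => ahat (i, r') + t * v r') - N0)
            ≤ lam * ((2 * t * P + t ^ 2 * Q) / (2 * N0)) := by
          apply mul_le_mul_of_nonneg_left _ (le_of_lt hlam)
          linarith
        have h4 : 2 * (n:ℝ)⁻¹ * t * S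
            ≤ (n:ℝ)⁻¹ * t ^ 2 * C + lam * ((2 * t * P + t ^ 2 * Q) / (2 * N0)) := by
          calc 2 * (n:ℝ)⁻¹ * t * S ≤ (n:ℝ)⁻¹ * t ^ 2 * C
                + lam * ((vecNorm fun r' => ahat (i, r') + t * v r') - N0) := h1
            _ ≤ _ := by linarith
        -- divide by t
        have h5 : (2 * (n:ℝ)⁻¹ * S) * t
            ≤ (lam * P / N0 + t * ((n:ℝ)⁻¹ * C + lam * Q / (2 * N0))) * t := by
          have heq : (lam * P / N0 + t * ((n:ℝ)⁻¹ * C + lam * Q / (2 * N0))) * t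
              = (n:ℝ)⁻¹ * t ^ 2 * C + lam * ((2 * t * P + t ^ 2 * Q) / (2 * N0)) := by
            field_simp
            ring
          rw [heq]
          calc (2 * (n:ℝ)⁻¹ * S) * t = 2 * (n:ℝ)⁻¹ * t * S := by ring
            _ ≤ _ := h4
        exact le_of_mul_le_mul_right h5 ht
      -- apply to ±e_r
      have hpos := claim (fun r' => if r' = r then 1 else 0)
      have hneg := claim (fun r' => if r' = r then -1 else 0)
      simp only [ite_mul, one_mul, neg_one_mul, zero_mul, mul_ite, mul_one, mul_neg, mul_zero,
        Finset.sum_ite_eq', Finset.mem_univ, if_true] at hpos hneg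
      rw [neg_div] at hneg
      have heq : 2 * (n:ℝ)⁻¹ * (∑ s, X s (i, r) * (y s - X.mulVec ahat s))
          = lam * ahat (i, r) / N0 := by linarith
      have hne0 : (n:ℝ) ≠ 0 := ne_of_gt hn'
      calc (∑ s, X s (i, r) * (y s - X.mulVec ahat s))
          = (n:ℝ) / 2 * (2 * (n:ℝ)⁻¹ * (∑ s, X s (i, r) * (y s - X.mulVec ahat s))) := by
            field_simp
        _ = (n:ℝ) / 2 * (lam * ahat (i, r) / N0) := by rw [heq]
        _ = lam * n / 2 * (ahat (i, r) / N0) := by ring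
    · -- zero blocks
      intro i h0
      set G := fun r => ∑ s, X s (i, r) * (y s - X.mulVec ahat s) with hGdef
      have claim : ∀ v : Fin p → ℝ,
          2 * (n:ℝ)⁻¹ * (∑ r', v r' * G r') ≤ lam * vecNorm v := by
        intro v
        set C := ∑ s, (∑ r', X s (i, r') * v r') ^ 2 with hCdef
        have hCnn : 0 ≤ C := Finset.sum_nonneg fun _ _ => sq_nonneg _
        have hD : 0 ≤ (n:ℝ)⁻¹ * C := by positivity
        apply GL8.le_of_forall_pos hD
        intro t ht
        have h1 := GL8.key hmin i v t
        have hz : ∀ r, ahat (i, r) = 0 := fun r => by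
          have := congrFun h0 r; simpa using this
        have hza : (fun r' => ahat (i, r') + t * v r') = fun r' => t * v r' :=
          funext fun r' => by rw [hz r']; ring
        have hzb : (fun r' : Fin p => ahat (i, r')) = (0 : Fin p → ℝ) := h0
        rw [hza, hzb, GL8.vecNorm_zero, GL8.vecNorm_smul, abs_of_pos ht, sub_zero] at h1
        have h5 : (2 * (n:ℝ)⁻¹ * (∑ r', v r' * G r')) * t
            ≤ (lam * vecNorm v + t * ((n:ℝ)⁻¹ * C)) * t := by
          calc (2 * (n:ℝ)⁻¹ * (∑ r', v r' * G r')) * t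
              = 2 * (n:ℝ)⁻¹ * t * (∑ r', v r' * G r') := by ring
            _ ≤ (n:ℝ)⁻¹ * t ^ 2 * C + lam * (t * vecNorm v) := h1
            _ = (lam * vecNorm v + t * ((n:ℝ)⁻¹ * C)) * t := by ring
        exact le_of_mul_le_mul_right h5 ht
      have hmain := claim G
      have hsq : ∑ r', G r' * G r' = vecNorm G ^ 2 := by
        rw [GL8.vecNorm_sq]
        exact Finset.sum_congr rfl fun r _ => (sq (G r)).symm ▸ by ring
      rw [hsq] at hmain
      -- from 2/n * ‖G‖² ≤ lam ‖G‖ conclude ‖G‖ ≤ lam n / 2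
      have hGnn := GL8.vecNorm_nonneg G
      rcases eq_or_lt_of_le hGnn with hG0 | hGpos
      · rw [← hG0]; positivity
      · have h6 : 2 * vecNorm G ^ 2 ≤ lam * (n:ℝ) * vecNorm G := by
          have hh := mul_le_mul_of_nonneg_left hmain (le_of_lt hn')
          calc 2 * vecNorm G ^ 2
              = ((n:ℝ) * (n:ℝ)⁻¹) * (2 * vecNorm G ^ 2) := by rw [hninv]; ring
            _ = (n:ℝ) * (2 * (n:ℝ)⁻¹ * vecNorm G ^ 2) := by ring
            _ ≤ (n:ℝ) * (lam * vecNorm G) := hh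
            _ = lam * (n:ℝ) * vecNorm G := by ring
        nlinarith [h6, hGpos, mul_pos hGpos hGpos]
  · -- KKT ⇒ minimality
    rintro ⟨h1, h2⟩ a
    rw [GL8.expand X y lam ahat a]
    have hblock : ∀ i : Fin N,
        2 * (n:ℝ)⁻¹ * (∑ r, (a (i, r) - ahat (i, r))
            * (∑ t, X t (i, r) * (y t - X.mulVec ahat t)))
          ≤ lam * ((vecNorm fun r => a (i, r)) - vecNorm fun r => ahat (i, r)) := by
      intro i
      by_cases hz : (fun r => ahat (i, r)) = (0 : Fin p → ℝ)
      · have hzr : ∀ r, ahat (i, r) = 0 := fun r => by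
          have := congrFun hz r; simpa using this
        have hGle := h2 i hz
        have hcs : ∑ r, (a (i, r) - ahat (i, r)) * (∑ t, X t (i, r) * (y t - X.mulVec ahat t))
            ≤ (vecNorm fun r => a (i, r))
              * vecNorm (fun r => ∑ t, X t (i, r) * (y t - X.mulVec ahat t)) := by
          have := GL8.cauchy (fun r => a (i, r) - ahat (i, r))
            (fun r => ∑ t, X t (i, r) * (y t - X.mulVec ahat t))
          have heq : (fun r => a (i, r) - ahat (i, r)) = fun r => a (i, r) :=
            funext fun r => by rw [hzr r]; ring
          rwa [heq] at this
        have hna := GL8.vecNorm_nonneg (fun r => a (i, r))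
        have hstep : ∑ r, (a (i, r) - ahat (i, r)) * (∑ t, X t (i, r) * (y t - X.mulVec ahat t))
            ≤ (vecNorm fun r => a (i, r)) * (lam * n / 2) :=
          hcs.trans (mul_le_mul_of_nonneg_left hGle hna)
        have h2ninv : (0:ℝ) ≤ 2 * (n:ℝ)⁻¹ := by positivity
        calc 2 * (n:ℝ)⁻¹ * (∑ r, (a (i, r) - ahat (i, r))
              * (∑ t, X t (i, r) * (y t - X.mulVec ahat t)))
            ≤ 2 * (n:ℝ)⁻¹ * ((vecNorm fun r => a (i, r)) * (lam * n / 2)) :=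
              mul_le_mul_of_nonneg_left hstep h2ninv
          _ = lam * (vecNorm fun r => a (i, r)) * ((n:ℝ) * (n:ℝ)⁻¹) := by ring
          _ = lam * ((vecNorm fun r => a (i, r)) - vecNorm fun r => ahat (i, r)) := by
              rw [hninv, hz, GL8.vecNorm_zero]; ring
      · -- nonzero block
        set N0 := vecNorm (fun s => ahat (i, s)) with hN0
        have hN0pos : 0 < N0 := GL8.vecNorm_pos hz
        have hgr : ∀ r, (∑ t, X t (i, r) * (y t - X.mulVec ahat t))
            = lam * n / 2 * (ahat (i, r) / N0) := h1 i hz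
        have hsum : ∑ r, (a (i, r) - ahat (i, r)) * (∑ t, X t (i, r) * (y t - X.mulVec ahat t))
            = lam * n / 2 * ((∑ r, a (i, r) * ahat (i, r)) - N0 ^ 2) / N0 := by
          have hN0sq : N0 ^ 2 = ∑ r, ahat (i, r) ^ 2 := GL8.vecNorm_sq _
          rw [hN0sq]
          rw [show ∑ r, (a (i, r) - ahat (i, r)) * (∑ t, X t (i, r) * (y t - X.mulVec ahat t))
              = ∑ r, (lam * n / 2 * ((a (i, r) * ahat (i, r)) / N0)
                  - lam * n / 2 * (ahat (i, r) ^ 2 / N0)) from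
            Finset.sum_congr rfl fun r _ => by rw [hgr r]; ring]
          rw [Finset.sum_sub_distrib, ← Finset.mul_sum, ← Finset.mul_sum,
            ← Finset.sum_div, ← Finset.sum_div]
          ring
        have hcs : ∑ r, a (i, r) * ahat (i, r)
            ≤ (vecNorm fun r => a (i, r)) * N0 := GL8.cauchy _ _
        rw [hsum]
        have hne0 : (n:ℝ) ≠ 0 := ne_of_gt hn'
        have key2 : 2 * (n:ℝ)⁻¹
              * (lam * n / 2 * ((∑ r, a (i, r) * ahat (i, r)) - N0 ^ 2) / N0)
            = lam * (((∑ r, a (i, r) * ahat (i, r)) - N0 ^ 2) / N0) := by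
          field_simp
        rw [key2]
        have hstep : ((∑ r, a (i, r) * ahat (i, r)) - N0 ^ 2) / N0
            ≤ (vecNorm fun r => a (i, r)) - N0 := by
          rw [div_le_iff₀ hN0pos]
          nlinarith [hcs]
        calc lam * (((∑ r, a (i, r) * ahat (i, r)) - N0 ^ 2) / N0)
            ≤ lam * ((vecNorm fun r => a (i, r)) - N0) :=
              mul_le_mul_of_nonneg_left hstep (le_of_lt hlam)
          _ = lam * ((vecNorm fun r => a (i, r)) - vecNorm fun r => ahat (i, r)) := rfl
    have hsumall := Finset.sum_le_sum (fun i (_ : i ∈ Finset.univ) => hblock i)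
    rw [← Finset.mul_sum, ← Finset.mul_sum] at hsumall
    have hprod : (∑ j, (a j - ahat j) * (∑ t, X t j * (y t - X.mulVec ahat t)))
        = ∑ i : Fin N, ∑ r, (a (i, r) - ahat (i, r))
            * (∑ t, X t (i, r) * (y t - X.mulVec ahat t)) :=
      Fintype.sum_prod_type _
    have hs2 : 0 ≤ (n:ℝ)⁻¹ * ∑ t, (∑ j, X t j * (a j - ahat j)) ^ 2 := by positivity
    have hfin : 2 * (n:ℝ)⁻¹ * (∑ j, (a j - ahat j) * (∑ t, X t j * (y t - X.mulVec ahat t)))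
        ≤ lam * ∑ i : Fin N, ((vecNorm fun r => a (i, r)) - vecNorm fun r => ahat (i, r)) := by
      rw [hprod]
      exact hsumall
    linarith

end
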